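/- The number of (m,n)-parking words with gcd(m,n) = 1 is m^{n−1}. -/

import Mathlib

def IsParkingWord (m n : ℕ) (p : Fin n → ℕ) : Prop :=
  (∀ j, p j < m) ∧
  ∀ i : ℕ, 1 ≤ i → i ≤ m →
    i * n ≤ m * (Finset.univ.filter (fun j => p j < i)).card

namespace ParkingAux

variable {m n : ℕ}

def cnt (n : ℕ) (p : Fin n → ℕ) (i : ℕ) : ℕ :=
  (Finset.univ.filter (fun j => p j < i)).card

def Fv (m n : ℕ) (p : Fin n → ℕ) (i : ℕ) : ℤ :=
  (m : ℤ) * cnt n p i - (i : ℤ) * n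

lemma cnt_zero (p : Fin n → ℕ) : cnt n p 0 = 0 := by
  simp [cnt]

lemma cnt_succ (p : Fin n → ℕ) (i : ℕ) :
    cnt n p (i + 1) = cnt n p i + (Finset.univ.filter (fun j => p j = i)).card := by
  classical
  rw [cnt, cnt, ← Finset.card_union_of_disjoint, ← Finset.filter_or]
  · congr 1
    ext j
    simp [Nat.lt_succ_iff_lt_or_eq, le_iff_lt_or_eq]
  · rw [Finset.disjoint_filter]
    intro j _ hj hj'
    omega

lemma cnt_top (p : Fin n → ℕ) (hp : ∀ j, p j < m) : cnt n p m = n := by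
  rw [cnt, Finset.filter_true_of_mem (fun j _ => hp j)]
  simp

lemma Fv_zero (p : Fin n → ℕ) : Fv m n p 0 = 0 := by
  simp [Fv, cnt_zero]

lemma Fv_succ (p : Fin n → ℕ) (i : ℕ) :
    Fv m n p (i + 1) =
      Fv m n p i + ((m : ℤ) * (Finset.univ.filter (fun j => p j = i)).card - n) := by
  rw [Fv, Fv, cnt_succ]
  push_cast
  ring

lemma Fv_top (p : Fin n → ℕ) (hp : ∀ j, p j < m) : Fv m n p m = 0 := by
  rw [Fv, cnt_top p hp]
  ring

lemma mod_eq_iff {a c i : ℕ} (ha : a < m) (hc : c < m) (hi : i < m) :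
    (a + c) % m = i ↔ a = (i + (m - c)) % m := by
  constructor
  · rintro rfl
    rw [Nat.mod_add_mod]
    have h1 : a + c + (m - c) = a + m := by omega
    rw [h1, Nat.add_mod_right, Nat.mod_eq_of_lt ha]
  · rintro rfl
    rw [Nat.mod_add_mod]
    have h1 : i + (m - c) + c = i + m := by omega
    rw [h1, Nat.add_mod_right, Nat.mod_eq_of_lt hi]

/-- Key shift formula for the running sums. -/
lemma shift_Fv (hm : 0 < m) (w : Fin n → ℕ) (hw : ∀ j, w j < m) (c : ℕ) (hc : c < m) :
    ∀ i ≤ m, Fv m n (fun j => (w j + c) % m) i =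
      Fv m n w ((i + (m - c)) % m) - Fv m n w ((m - c) % m) := by
  intro i
  induction i with
  | zero =>
    intro _
    rw [Fv_zero, Nat.zero_add, sub_self]
  | succ i ih =>
    intro hi1
    have hi : i < m := by omega
    have ihv := ih (le_of_lt hi)
    set r := (i + (m - c)) % m with hr
    have hrm : r < m := Nat.mod_lt _ hm
    have hcard : (Finset.univ.filter (fun j => (w j + c) % m = i)).card =
        (Finset.univ.filter (fun j => w j = r)).card := by
      congr 1
      apply Finset.filter_congr
      intro j _
      exact mod_eq_iff (hw j) hc hi
    have hsucc : (i + 1 + (m - c)) % m = (r + 1) % m := by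
      rw [hr, Nat.mod_add_mod]
      congr 1
      omega
    rw [Fv_succ, ihv, hcard, hsucc]
    rcases Nat.lt_or_ge (r + 1) m with h | h
    · rw [Nat.mod_eq_of_lt h, Fv_succ]
      ring
    · have hrm1 : r + 1 = m := by omega
      have h0 : (r + 1) % m = 0 := by rw [hrm1, Nat.mod_self]
      rw [h0, Fv_zero]
      have h2 : Fv m n w (r + 1) = 0 := by rw [hrm1]; exact Fv_top w hw
      rw [Fv_succ] at h2
      linarith

lemma isParkingWord_iff (p : Fin n → ℕ) :
    IsParkingWord m n p ↔ ((∀ j, p j < m) ∧ ∀ i ≤ m, 0 ≤ Fv m n p i) := by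
  constructor
  · rintro ⟨h1, h2⟩
    refine ⟨h1, fun i hi => ?_⟩
    rcases Nat.eq_zero_or_pos i with rfl | hi0
    · rw [Fv_zero]
    · have := h2 i hi0 hi
      rw [Fv, sub_nonneg]
      exact_mod_cast this
  · rintro ⟨h1, h2⟩
    refine ⟨h1, fun i hi1 hi2 => ?_⟩
    have := h2 i hi2
    rw [Fv, sub_nonneg] at this
    exact_mod_cast this

/-- Shift by `c` is parking iff `(m-c) % m` is an argmin of `Fv` on `[0, m)`. -/
lemma shift_parking_iff (hm : 0 < m) (w : Fin n → ℕ) (hw : ∀ j, w j < m)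
    (c : ℕ) (hc : c < m) :
    IsParkingWord m n (fun j => (w j + c) % m) ↔
      ∀ r < m, Fv m n w ((m - c) % m) ≤ Fv m n w r := by
  have hb : ∀ j, (w j + c) % m < m := fun j => Nat.mod_lt _ hm
  rw [isParkingWord_iff]
  constructor
  · rintro ⟨-, h⟩ r hr
    have hi : (r + c) % m < m := Nat.mod_lt _ hm
    have h1 := h ((r + c) % m) (le_of_lt hi)
    rw [shift_Fv hm w hw c hc _ (le_of_lt hi)] at h1
    have heq : ((r + c) % m + (m - c)) % m = r := by
      rw [Nat.mod_add_mod]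
      have h2 : r + c + (m - c) = r + m := by omega
      rw [h2, Nat.add_mod_right, Nat.mod_eq_of_lt hr]
    rw [heq] at h1
    linarith
  · intro h
    refine ⟨hb, fun i hi => ?_⟩
    rw [shift_Fv hm w hw c hc i hi]
    have := h ((i + (m - c)) % m) (Nat.mod_lt _ hm)
    linarith

lemma Fv_inj (hcop : Nat.Coprime m n) (w : Fin n → ℕ) {i i' : ℕ}
    (hi : i < m) (hi' : i' < m) (h : Fv m n w i = Fv m n w i') : i = i' := by
  rw [Fv, Fv] at h
  have hdvd : (m : ℤ) ∣ ((i : ℤ) - i') * n := by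
    refine ⟨(cnt n w i : ℤ) - cnt n w i', ?_⟩
    linarith
  have hco : IsCoprime (m : ℤ) (n : ℤ) := by
    rw [Int.isCoprime_iff_gcd_eq_one]
    exact_mod_cast hcop
  obtain ⟨k, hk⟩ := hco.dvd_of_dvd_mul_right hdvd
  have hmpos : 0 < m := Nat.lt_of_le_of_lt (Nat.zero_le i) hi
  have hm' : (0 : ℤ) < m := by exact_mod_cast hmpos
  have hk0 : k = 0 := by
    rcases lt_trichotomy k 0 with h' | h' | h'
    · nlinarith [hk]
    · exact h'
    · nlinarith [hk]
  rw [hk0, mul_zero] at hk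
  omega

lemma msub_mod (_hm : 0 < m) {c : ℕ} (hc : c < m) :
    (m - c) % m = if c = 0 then 0 else m - c := by
  rcases Nat.eq_zero_or_pos c with rfl | hc0
  · simp
  · rw [if_neg (by omega), Nat.mod_eq_of_lt (by omega)]

/-- Cycle lemma: there is a unique shift making `w` a parking word. -/
lemma key (hm : 0 < m) (hcop : Nat.Coprime m n) (w : Fin n → ℕ) (hw : ∀ j, w j < m) :
    ∃! c : ℕ, c < m ∧ IsParkingWord m n (fun j => (w j + c) % m) := by
  obtain ⟨d, hd, hdmin⟩ := Finset.exists_min_image (Finset.range m) (Fv m n w)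
    ⟨0, Finset.mem_range.mpr hm⟩
  rw [Finset.mem_range] at hd
  refine ⟨(m - d) % m, ⟨Nat.mod_lt _ hm, ?_⟩, ?_⟩
  · rw [shift_parking_iff hm w hw _ (Nat.mod_lt _ hm)]
    have hdd : (m - (m - d) % m) % m = d := by
      rw [msub_mod hm hd]
      rcases Nat.eq_zero_or_pos d with rfl | hd0
      · simp
      · rw [if_neg (by omega), msub_mod hm (by omega), if_neg (by omega)]
        omega
    rw [hdd]
    intro r hr
    exact hdmin r (Finset.mem_range.mpr hr)
  · rintro c ⟨hc, hpc⟩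
    rw [shift_parking_iff hm w hw c hc] at hpc
    have h1 : Fv m n w ((m - c) % m) ≤ Fv m n w d := hpc d hd
    have h2 : Fv m n w d ≤ Fv m n w ((m - c) % m) :=
      hdmin _ (Finset.mem_range.mpr (Nat.mod_lt _ hm))
    have heq : (m - c) % m = d := Fv_inj hcop w (Nat.mod_lt _ hm) hd (le_antisymm h1 h2)
    rw [msub_mod hm hc] at heq
    rcases Nat.eq_zero_or_pos c with rfl | hc0
    · simp only [if_pos rfl] at heq
      rw [← heq]
      simp
    · rw [if_neg (by omega)] at heq
      rw [← heq, msub_mod hm (by omega), if_neg (by omega)]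
      omega

end ParkingAux

/-- For `m`, `n` coprime, there are `m^(n-1)` many (m,n)-parking words. -/
theorem card_parking_words (m n : ℕ) (hm : 0 < m) (hn : 0 < n)
    (hcop : Nat.Coprime m n) :
    Nat.card {p : Fin n → ℕ // IsParkingWord m n p} = m ^ (n - 1) := by
  classical
  haveI : NeZero m := ⟨hm.ne'⟩
  set P : (Fin n → Fin m) → Prop := fun w => IsParkingWord m n (fun j => (w j : ℕ)) with hP
  have e1 : {p : Fin n → ℕ // IsParkingWord m n p} ≃ {w : Fin n → Fin m // P w} :=
    { toFun := fun p => ⟨fun j => ⟨p.1 j, p.2.1 j⟩, p.2⟩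
      invFun := fun w => ⟨fun j => (w.1 j : ℕ), w.2⟩
      left_inv := fun p => rfl
      right_inv := fun w => rfl }
  have hval : ∀ (w : Fin n → Fin m) (d : Fin m),
      (fun j => ((w j + d : Fin m) : ℕ)) = fun j => ((w j : ℕ) + (d : ℕ)) % m := by
    intro w d
    funext j
    exact Fin.val_add _ _
  have key' : ∀ w : Fin n → Fin m, ∃! c : Fin m, P (fun j => w j + c) := by
    intro w
    obtain ⟨c, ⟨hc, hpc⟩, huniq⟩ := ParkingAux.key hm hcop (fun j => (w j : ℕ))
      (fun j => (w j).isLt)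
    refine ⟨⟨c, hc⟩, ?_, ?_⟩
    · show IsParkingWord m n _
      rw [hval]
      exact hpc
    · intro c' hpc'
      apply Fin.ext
      exact huniq (c' : ℕ) ⟨c'.isLt, by rw [← hval]; exact hpc'⟩
  let cf : (Fin n → Fin m) → Fin m := fun w => (key' w).exists.choose
  have hcf : ∀ w, P (fun j => w j + cf w) := fun w => (key' w).exists.choose_spec
  have hcu : ∀ w c, P (fun j => w j + c) → c = cf w :=
    fun w c hc => (key' w).unique hc (hcf w)
  let e2 : (Fin n → Fin m) ≃ {w : Fin n → Fin m // P w} × Fin m :=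
    { toFun := fun w => (⟨fun j => w j + cf w, hcf w⟩, cf w)
      invFun := fun vc => fun j => vc.1.1 j - vc.2
      left_inv := fun w => by funext j; simp
      right_inv := fun vc => by
        obtain ⟨⟨v, hv⟩, c⟩ := vc
        have h1 : (fun j => (v j - c) + c) = v := by funext j; simp
        have h2 : cf (fun j => v j - c) = c := (hcu _ c (by rw [h1]; exact hv)).symm
        simp only [h2]
        exact Prod.ext (Subtype.ext h1) rfl
    }
  have h1 : Nat.card (Fin n → Fin m) = m ^ n := by
    simp [Nat.card_eq_fintype_card]
  have h2 : Nat.card {w : Fin n → Fin m // P w} * m = m ^ n := by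
    rw [← h1, Nat.card_congr e2, Nat.card_prod, Nat.card_eq_fintype_card (α := Fin m),
      Fintype.card_fin]
  rw [Nat.card_congr e1]
  have h3 : m ^ n = m ^ (n - 1) * m := by
    rw [← pow_succ]
    congr 1
    omega
  rw [h3] at h2
  exact Nat.eq_of_mul_eq_mul_right hm h2
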